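/- Let $\{u_j\}_{j=0}^n$ be a Chebyshev set on $[a,b]$ and let $\sigma', \sigma''$ be two convex representations of the same moment vector $\mathbf{c}$, each with positive weights and index at most $(n+2)/2$, both having a root at the left endpoint $a$ with weights $\lambda_1'$ and $\lambda_1''$ respectively. If the representations are distinct, then $\lambda_1' \ne \lambda_1''$. -/

import Mathlib

open Classical in
lemma cheb_dual (n : ℕ) (a b : ℝ) (u : Fin (n + 1) → ℝ → ℝ)
    (hcheb : ∀ c : Fin (n + 1) → ℝ, c ≠ 0 →
      ∀ t : Fin (n + 1) → ℝ, StrictMono t → (∀ i, t i ∈ Set.Icc a b) →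
        ¬ (∀ i, ∑ j, c j * u j (t i) = 0))
    (e : Fin (n + 1) → ℝ) (he : StrictMono e) (heab : ∀ i, e i ∈ Set.Icc a b)
    (k : Fin (n + 1)) :
    ∃ c : Fin (n + 1) → ℝ, ∀ i, ∑ j, c j * u j (e i) = if i = k then 1 else 0 := by
  set M : Matrix (Fin (n + 1)) (Fin (n + 1)) ℝ := fun i j => u j (e i) with hM
  have hinj : Function.Injective M.mulVecLin := by
    rw [← LinearMap.ker_eq_bot, LinearMap.ker_eq_bot']
    intro c hc
    by_contra hc0
    refine hcheb c hc0 e he heab fun i => ?_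
    have := congrFun hc i
    rw [Matrix.mulVecLin_apply] at this
    simpa [Matrix.mulVecLin_apply, Matrix.mulVec, dotProduct, hM, mul_comm] using this
  obtain ⟨c, hc⟩ := (LinearMap.injective_iff_surjective.mp hinj)
    (fun i => if i = k then 1 else 0)
  refine ⟨c, fun i => ?_⟩
  have := congrFun hc i
  rw [Matrix.mulVecLin_apply] at this
  simpa [Matrix.mulVecLin_apply, Matrix.mulVec, dotProduct, hM, mul_comm] using this

open Classical in
lemma coeffs_vanish (n : ℕ) (a b : ℝ) (hab : a < b) (u : Fin (n + 1) → ℝ → ℝ)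
    (hcheb : ∀ c : Fin (n + 1) → ℝ, c ≠ 0 →
      ∀ t : Fin (n + 1) → ℝ, StrictMono t → (∀ i, t i ∈ Set.Icc a b) →
        ¬ (∀ i, ∑ j, c j * u j (t i) = 0))
    (T : Finset ℝ) (hT : ↑T ⊆ Set.Icc a b) (hcard : T.card ≤ n + 1)
    (μ : ℝ → ℝ) (hsum : ∀ j, ∑ s ∈ T, μ s * u j s = 0) :
    ∀ s ∈ T, μ s = 0 := by
  have hinf : (Set.Icc a b).Infinite := Set.Icc_infinite hab
  obtain ⟨W', hTW', hW'ab, hW'card⟩ := hinf.exists_superset_ncard_eq (k := n + 1) hT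
    T.finite_toSet (by rwa [Set.ncard_coe_finset])
  have hW'fin : W'.Finite := Set.finite_of_ncard_ne_zero (by omega)
  have hWcard : hW'fin.toFinset.card = n + 1 := by
    rw [← Set.ncard_eq_toFinset_card _ hW'fin]; exact hW'card
  set W := hW'fin.toFinset with hWdef
  set e : Fin (n + 1) → ℝ := ⇑(W.orderEmbOfFin hWcard) with he
  have hestrict : StrictMono e := (W.orderEmbOfFin hWcard).strictMono
  have heab : ∀ i, e i ∈ Set.Icc a b := fun i => hW'ab (by
    have : e i ∈ W := W.orderEmbOfFin_mem hWcard i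
    simpa [hWdef, Set.Finite.mem_toFinset] using this)
  intro s hs
  have hsW : s ∈ Set.range e := by
    rw [he, Finset.range_orderEmbOfFin]
    simpa [hWdef, Set.Finite.mem_toFinset] using hTW' hs
  obtain ⟨k, hk⟩ := hsW
  obtain ⟨c, hdual⟩ := cheb_dual n a b u hcheb e hestrict heab k
  have key : ∀ s' ∈ T, ∑ j, c j * u j s' = if s' = s then 1 else 0 := by
    intro s' hs'
    have hs'W : s' ∈ Set.range e := by
      rw [he, Finset.range_orderEmbOfFin]
      simpa [hWdef, Set.Finite.mem_toFinset] using hTW' hs'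
    obtain ⟨i, hi⟩ := hs'W
    rw [← hi, hdual i, ← hk]
    by_cases h : i = k
    · rw [if_pos h, if_pos (by rw [h])]
    · rw [if_neg h, if_neg (fun hh => h (hestrict.injective hh))]
  have h0 : ∑ s' ∈ T, μ s' * (∑ j, c j * u j s') = 0 := by
    have hcomm : ∑ s' ∈ T, μ s' * (∑ j, c j * u j s')
        = ∑ j, c j * (∑ s' ∈ T, μ s' * u j s') := by
      simp_rw [Finset.mul_sum]
      rw [Finset.sum_comm]
      exact Finset.sum_congr rfl fun i _ => Finset.sum_congr rfl fun j _ => by ring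
    rw [hcomm]
    simp [hsum]
  rw [Finset.sum_congr rfl (fun s' hs' => by rw [key s' hs'])] at h0
  rw [Finset.sum_eq_single_of_mem s hs (fun s' _ hs' => by rw [if_neg hs', mul_zero]),
    if_pos rfl, mul_one] at h0
  exact h0

open Classical in
/-- Two distinct positive-weight representations of the same moment vector over
a Chebyshev set, each of index at most `(n+2)/2` and each having a root at the
left endpoint `a`, must carry different weights at `a`. -/
theorem endpoint_weights_differ
    (n : ℕ) (a b : ℝ) (hab : a < b) (u : Fin (n + 1) → ℝ → ℝ)
    (hcont : ∀ j, ContinuousOn (u j) (Set.Icc a b))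
    (hcheb : ∀ c : Fin (n + 1) → ℝ, c ≠ 0 →
      ∀ t : Fin (n + 1) → ℝ, StrictMono t → (∀ i, t i ∈ Set.Icc a b) →
        ¬ (∀ i, ∑ j, c j * u j (t i) = 0))
    (c : Fin (n + 1) → ℝ)
    (p q : ℕ) (hp : 0 < p) (hq : 0 < q)
    (t' : Fin p → ℝ) (lam' : Fin p → ℝ)
    (t'' : Fin q → ℝ) (lam'' : Fin q → ℝ)
    (ht' : StrictMono t') (ht'ab : ∀ i, t' i ∈ Set.Icc a b)
    (ht'' : StrictMono t'') (ht''ab : ∀ i, t'' i ∈ Set.Icc a b)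
    (hlam' : ∀ i, 0 < lam' i) (hlam'' : ∀ i, 0 < lam'' i)
    (hrep' : ∀ j, c j = ∑ i, lam' i * u j (t' i))
    (hrep'' : ∀ j, c j = ∑ i, lam'' i * u j (t'' i))
    (hidx' : 2 * p ≤ n + 2 + (if a ∈ Set.range t' then 1 else 0)
        + (if b ∈ Set.range t' then 1 else 0))
    (hidx'' : 2 * q ≤ n + 2 + (if a ∈ Set.range t'' then 1 else 0)
        + (if b ∈ Set.range t'' then 1 else 0))
    (ha' : t' ⟨0, hp⟩ = a) (ha'' : t'' ⟨0, hq⟩ = a)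
    (hne : ¬ (∃ h : p = q, ∀ i : Fin p,
      t' i = t'' (Fin.cast h i) ∧ lam' i = lam'' (Fin.cast h i))) :
    lam' ⟨0, hp⟩ ≠ lam'' ⟨0, hq⟩ := by
  intro heq
  apply hne
  set S' : Finset ℝ := Finset.image t' Finset.univ with hS'
  set S'' : Finset ℝ := Finset.image t'' Finset.univ with hS''
  set S : Finset ℝ := S' ∪ S'' with hS
  have ht'S : ∀ i, t' i ∈ S := fun i =>
    Finset.mem_union_left _ (Finset.mem_image_of_mem t' (Finset.mem_univ i))
  have ht''S : ∀ i, t'' i ∈ S := fun i =>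
    Finset.mem_union_right _ (Finset.mem_image_of_mem t'' (Finset.mem_univ i))
  have haS : a ∈ S := ha' ▸ ht'S ⟨0, hp⟩
  set μ : ℝ → ℝ := fun s =>
    (∑ i, if t' i = s then lam' i else 0) - (∑ i, if t'' i = s then lam'' i else 0) with hμ
  -- the moments of μ vanish
  have expand : ∀ (m : ℕ) (t : Fin m → ℝ) (lam : Fin m → ℝ), (∀ i, t i ∈ S) →
      ∀ j, ∑ s ∈ S, (∑ i, if t i = s then lam i else 0) * u j s
        = ∑ i, lam i * u j (t i) := by
    intro m t lam htS j
    simp_rw [Finset.sum_mul, ite_mul, zero_mul]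
    rw [Finset.sum_comm]
    refine Finset.sum_congr rfl fun i _ => ?_
    have hc : ∀ s ∈ S, (if t i = s then lam i * u j s else 0)
        = (if t i = s then lam i * u j (t i) else 0) := by
      intro s _
      by_cases h : t i = s
      · rw [if_pos h, if_pos h, h]
      · rw [if_neg h, if_neg h]
    rw [Finset.sum_congr rfl hc, Finset.sum_ite_eq S (t i) (fun _ => lam i * u j (t i)),
      if_pos (htS i)]
  have hA : ∀ j, ∑ s ∈ S, μ s * u j s = 0 := by
    intro j
    simp only [hμ, sub_mul]
    rw [Finset.sum_sub_distrib, expand p t' lam' ht'S j, expand q t'' lam'' ht''S j,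
      ← hrep' j, ← hrep'' j, sub_self]
  -- the single-representation sums evaluate by injectivity
  have single : ∀ (m : ℕ) (t : Fin m → ℝ) (lam : Fin m → ℝ), Function.Injective t →
      ∀ i₀ : Fin m, (∑ i, if t i = t i₀ then lam i else 0) = lam i₀ := by
    intro m t lam hinj i₀
    rw [Finset.sum_eq_single i₀]
    · rw [if_pos rfl]
    · intro i _ hi
      exact if_neg fun h => hi (hinj h)
    · simp
  -- μ vanishes at a
  have hμa : μ a = 0 := by
    have h1 := single p t' lam' ht'.injective ⟨0, hp⟩
    have h2 := single q t'' lam'' ht''.injective ⟨0, hq⟩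
    rw [ha'] at h1; rw [ha''] at h2
    simp only [hμ, h1, h2, heq, sub_self]
  -- cardinality bound
  have hcardS : (S.erase a).card ≤ n + 1 := by
    have hain' : a ∈ Set.range t' := ⟨⟨0, hp⟩, ha'⟩
    have hain'' : a ∈ Set.range t'' := ⟨⟨0, hq⟩, ha''⟩
    have hcard' : S'.card = p := by
      rw [hS', Finset.card_image_of_injective _ ht'.injective, Finset.card_univ,
        Fintype.card_fin]
    have hcard'' : S''.card = q := by
      rw [hS'', Finset.card_image_of_injective _ ht''.injective, Finset.card_univ,
        Fintype.card_fin]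
    have hunion := Finset.card_union_add_card_inter S' S''
    rw [← hS] at hunion
    have haI : a ∈ S' ∩ S'' := by
      rw [Finset.mem_inter]
      constructor
      · exact ha' ▸ Finset.mem_image_of_mem t' (Finset.mem_univ _)
      · exact ha'' ▸ Finset.mem_image_of_mem t'' (Finset.mem_univ _)
    have hI1 : 1 ≤ (S' ∩ S'').card := Finset.card_pos.mpr ⟨a, haI⟩
    have herase : (S.erase a).card = S.card - 1 := Finset.card_erase_of_mem haS
    rw [if_pos hain'] at hidx'
    rw [if_pos hain''] at hidx''
    by_cases hb' : b ∈ Set.range t' <;> by_cases hb'' : b ∈ Set.range t''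
    · have hbI : b ∈ S' ∩ S'' := by
        rw [Finset.mem_inter]
        obtain ⟨i1, hi1⟩ := hb'
        obtain ⟨i2, hi2⟩ := hb''
        constructor
        · exact hi1 ▸ Finset.mem_image_of_mem t' (Finset.mem_univ _)
        · exact hi2 ▸ Finset.mem_image_of_mem t'' (Finset.mem_univ _)
      have hI2 : 2 ≤ (S' ∩ S'').card := by
        have hsub : ({a, b} : Finset ℝ) ⊆ S' ∩ S'' := by
          intro x hx
          rcases Finset.mem_insert.mp hx with rfl | hx
          · exact haI
          · rw [Finset.mem_singleton.mp hx]; exact hbI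
        have h2 : ({a, b} : Finset ℝ).card = 2 := by
          rw [Finset.card_insert_of_notMem (by simp [hab.ne]), Finset.card_singleton]
        exact h2 ▸ Finset.card_le_card hsub
      rw [if_pos hb'] at hidx'
      rw [if_pos hb''] at hidx''
      omega
    · rw [if_pos hb'] at hidx'
      rw [if_neg hb''] at hidx''
      omega
    · rw [if_neg hb'] at hidx'
      rw [if_pos hb''] at hidx''
      omega
    · rw [if_neg hb'] at hidx'
      rw [if_neg hb''] at hidx''
      omega
  -- μ vanishes everywhere on S
  have hμ0 : ∀ s ∈ S, μ s = 0 := by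
    have hsum : ∀ j, ∑ s ∈ S.erase a, μ s * u j s = 0 := by
      intro j
      have h := Finset.add_sum_erase S (fun s => μ s * u j s) haS
      rw [hA j] at h
      simpa [hμa] using h
    have hTab : ↑(S.erase a) ⊆ Set.Icc a b := by
      intro x hx
      have hx' : x ∈ S := Finset.mem_of_mem_erase (by exact_mod_cast hx)
      rcases Finset.mem_union.mp hx' with h | h
      · obtain ⟨i, _, rfl⟩ := Finset.mem_image.mp h
        exact ht'ab i
      · obtain ⟨i, _, rfl⟩ := Finset.mem_image.mp h
        exact ht''ab i
    have hvan := coeffs_vanish n a b hab u hcheb (S.erase a) hTab hcardS μ hsum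
    intro s hs
    by_cases hsa : s = a
    · rw [hsa]; exact hμa
    · exact hvan s (Finset.mem_erase.mpr ⟨hsa, hs⟩)
  -- matching the representations
  have key' : ∀ i : Fin p, ∃ j : Fin q, t'' j = t' i ∧ lam'' j = lam' i := by
    intro i
    have h0 := hμ0 (t' i) (ht'S i)
    rw [hμ, sub_eq_zero, single p t' lam' ht'.injective i] at h0
    by_cases hex : ∃ j, t'' j = t' i
    · obtain ⟨j, hj⟩ := hex
      refine ⟨j, hj, ?_⟩
      have h2 : (∑ j', if t'' j' = t' i then lam'' j' else 0) = lam'' j := by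
        rw [Finset.sum_eq_single j]
        · rw [if_pos hj]
        · intro j' _ hj'
          exact if_neg fun h => hj' (ht''.injective (h.trans hj.symm))
        · simp
      rw [h2] at h0
      exact h0.symm
    · push_neg at hex
      have h2 : (∑ j', if t'' j' = t' i then lam'' j' else 0) = 0 :=
        Finset.sum_eq_zero fun j' _ => if_neg (hex j')
      rw [h2] at h0
      exact absurd h0 (hlam' i).ne'
  have key'' : ∀ j : Fin q, ∃ i : Fin p, t' i = t'' j := by
    intro j
    have h0 := hμ0 (t'' j) (ht''S j)
    rw [hμ, sub_eq_zero, single q t'' lam'' ht''.injective j] at h0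
    by_cases hex : ∃ i, t' i = t'' j
    · exact hex
    · push_neg at hex
      have h2 : (∑ i, if t' i = t'' j then lam' i else 0) = 0 :=
        Finset.sum_eq_zero fun i _ => if_neg (hex i)
      rw [h2] at h0
      exact absurd h0 (hlam'' j).ne
  have hrange : Set.range t' = Set.range t'' := by
    apply Set.Subset.antisymm
    · rintro x ⟨i, rfl⟩
      obtain ⟨j, hj, -⟩ := key' i
      exact ⟨j, hj⟩
    · rintro x ⟨j, rfl⟩
      obtain ⟨i, hi⟩ := key'' j
      exact ⟨i, hi⟩
  have hpq : p = q := by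
    have h1 : (S' : Set ℝ) = Set.range t' := by simp [hS']
    have h2 : (S'' : Set ℝ) = Set.range t'' := by simp [hS'']
    have h3 : S' = S'' := Finset.coe_injective (by rw [h1, h2, hrange])
    have c1 : S'.card = p := by
      rw [hS', Finset.card_image_of_injective _ ht'.injective, Finset.card_univ,
        Fintype.card_fin]
    have c2 : S''.card = q := by
      rw [hS'', Finset.card_image_of_injective _ ht''.injective, Finset.card_univ,
        Fintype.card_fin]
    rw [← c1, ← c2, h3]
  refine ⟨hpq, fun i => ?_⟩
  have hcaststrict : StrictMono (Fin.cast hpq) := fun x y h => h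
  have hg : StrictMono (t'' ∘ Fin.cast hpq) := ht''.comp hcaststrict
  have hcastsurj : Function.Surjective (Fin.cast hpq) := fun j =>
    ⟨Fin.cast hpq.symm j, rfl⟩
  have hgr : Set.range (t'' ∘ Fin.cast hpq) = Set.range t'' :=
    hcastsurj.range_comp t''
  have hwf : WellFoundedLT (Fin p) := inferInstance
  have hteq : t' = t'' ∘ Fin.cast hpq :=
    (StrictMono.range_inj ht' hg).mp (hrange.trans hgr.symm)
  refine ⟨congrFun hteq i, ?_⟩
  obtain ⟨j, hj, hlamj⟩ := key' i
  have hji : j = Fin.cast hpq i := ht''.injective (hj.trans (congrFun hteq i))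
  rw [← hji]
  exact hlamj.symm
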